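/- Let n be odd, n = 2bI + b + 2d with b odd, 3 ≤ b ≤ n/3, I ≥ 1, 0 ≤ d ≤ b−1, and μ ≥ 2. Suppose for each i ∈ {1,…,2I} there exist μ partial transversals of the b×b block B_{0,b} of B_n (using each symbol of {(b−1)/2, …, 3(b−1)/2} exactly once per partial transversal) intersecting stably in t_i points, and there exist μ partial transversals of the (b+d)×(b+d) block B_{0,b+d} using each symbol of {(b−1)/2,…,3(b−1)/2 + 2d} \ {b + 2j : 0 ≤ j < d} exactly once, intersecting stably in t₀ points. Then there exist μ transversals of B_n intersecting stably in exactly d + Σ_{i=0}^{2I} t_i points. -/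

import Mathlib

def IsTransversal (n : ℕ) (T : Set (ZMod n × ZMod n × ZMod n)) : Prop :=
  (∀ x ∈ T, x.2.2 = x.1 + x.2.1) ∧
  (∀ r : ZMod n, ∃! x : ZMod n × ZMod n × ZMod n, x ∈ T ∧ x.1 = r) ∧
  (∀ c : ZMod n, ∃! x : ZMod n × ZMod n × ZMod n, x ∈ T ∧ x.2.1 = c) ∧
  (∀ s : ZMod n, ∃! x : ZMod n × ZMod n × ZMod n, x ∈ T ∧ x.2.2 = s)

def StablyIntersect (n μ : ℕ) (T : Fin μ → Set (ZMod n × ZMod n × ZMod n)) (t : ℕ) : Prop :=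
  ∃ S : Set (ZMod n × ZMod n × ZMod n), S.ncard = t ∧ S = ⋂ i, T i ∧
    ∀ i j : Fin μ, i < j → T i ∩ T j = S

-- helpers
def boff (msize : ℕ → ℕ) (j : ℕ) : ℕ := ∑ k ∈ Finset.range j, msize k

def bcm (n : ℕ) (msize : ℕ → ℕ) (j : ℕ) (p : ℕ × ℕ) : ZMod n × ZMod n × ZMod n :=
  (((boff msize j + p.1 : ℕ) : ZMod n), ((boff msize j + p.2 : ℕ) : ZMod n),
    ((2 * boff msize j + p.1 + p.2 : ℕ) : ZMod n))

lemma castinj {n : ℕ} [NeZero n] {a b : ℕ} (ha : a < n) (hb : b < n)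
    (h : (a : ZMod n) = b) : a = b := by
  have h1 := ZMod.val_cast_of_lt ha
  have h2 := ZMod.val_cast_of_lt hb
  rw [h] at h1; omega

lemma winj {n w : ℕ} (hn : 0 < n) {a b : ℕ} (h1 : w ≤ a) (h2 : a < w + n) (h3 : w ≤ b)
    (h4 : b < w + n) (h : (a : ZMod n) = (b : ZMod n)) : a = b := by
  have hm := (ZMod.natCast_eq_natCast_iff a b n).mp h
  rcases le_total a b with hab | hab
  · have hd := (Nat.modEq_iff_dvd' hab).mp hm
    rcases Nat.eq_zero_or_pos (b - a) with h0 | h0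
    · omega
    · have := Nat.le_of_dvd h0 hd; omega
  · have hd := (Nat.modEq_iff_dvd' hab).mp hm.symm
    rcases Nat.eq_zero_or_pos (a - b) with h0 | h0
    · omega
    · have := Nat.le_of_dvd h0 hd; omega

lemma ncard_aux {X : Type*} (f : ℕ → Set X) (g : ℕ → ℕ) :
    ∀ N, (∀ j < N, (f j).Finite) → (∀ j < N, ∀ k < N, j ≠ k → Disjoint (f j) (f k)) →
    (∀ j < N, (f j).ncard = g j) →
    (⋃ j ∈ Finset.range N, f j).ncard = ∑ j ∈ Finset.range N, g j := by
  intro N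
  induction N with
  | zero => simp
  | succ N ih =>
    intro hfin hdisj hcard
    rw [Finset.sum_range_succ, Finset.range_add_one]
    rw [show (⋃ j ∈ insert N (Finset.range N), f j) = (⋃ j ∈ Finset.range N, f j) ∪ f N by
      simp [Set.biUnion_insert, Set.union_comm]]
    rw [Set.ncard_union_eq ?disj ?f1 ?f2]
    · rw [ih (fun j hj => hfin j (by omega)) (fun j hj k hk => hdisj j (by omega) k (by omega))
        (fun j hj => hcard j (by omega)), hcard N (by omega)]
    case disj =>
      rw [Set.disjoint_left]
      intro a ha hb
      simp only [Set.mem_iUnion] at ha hb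
      obtain ⟨j, hj, haj⟩ := ha
      simp only [Finset.mem_coe, Finset.mem_range] at hj
      exact (Set.disjoint_left.mp (hdisj j (by omega) N (by omega) (by omega)) haj) hb
    case f1 => exact Set.Finite.biUnion (Finset.range N).finite_toSet (fun j hj => hfin j (by simp at hj; omega))
    case f2 => exact hfin N (by omega)

lemma projection_bij {X Y : Type*} [Fintype Y] (s : Set X) (f : X → Y)
    (hinj : Set.InjOn f s) (hcard : s.ncard = Fintype.card Y) :
    ∀ y, ∃! x, x ∈ s ∧ f x = y := by
  have h1 : (f '' s).ncard = Fintype.card Y := by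
    rw [Set.ncard_image_of_injOn hinj]; exact hcard
  have h2 : f '' s = Set.univ := by
    refine Set.eq_of_subset_of_ncard_le (Set.subset_univ _) ?_ Set.finite_univ
    rw [Set.ncard_univ, Nat.card_eq_fintype_card]; omega
  intro y
  have : y ∈ f '' s := h2 ▸ Set.mem_univ y
  obtain ⟨x, hx, rfl⟩ := this
  exact ⟨x, ⟨hx, rfl⟩, fun z hz => hinj hz.1 hx hz.2⟩
theorem blocks_construction (n N μ w : ℕ) (hn : 0 < n) (hμ : 2 ≤ μ)
    (msize : ℕ → ℕ) (Q : ℕ → Fin μ → Set (ℕ × ℕ)) (tt : ℕ → ℕ) (srep : ℕ → ℕ → ℕ)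
    (htot : ∑ k ∈ Finset.range N, msize k = n)
    (hbounds : ∀ j < N, ∀ α, ∀ p ∈ Q j α, p.1 < msize j ∧ p.2 < msize j)
    (hrow : ∀ j < N, ∀ α, ∀ r < msize j, ∃! p : ℕ × ℕ, p ∈ Q j α ∧ p.1 = r)
    (hcol : ∀ j < N, ∀ α, ∀ p ∈ Q j α, ∀ q ∈ Q j α, p.2 = q.2 → p = q)
    (hsymu : ∀ j < N, ∀ α, ∀ p ∈ Q j α, ∀ q ∈ Q j α, p.1 + p.2 = q.1 + q.2 → p = q)
    (hsym : ∀ j < N, ∀ α, ∀ p ∈ Q j α,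
      ((2 * boff msize j + p.1 + p.2 : ℕ) : ZMod n) = (srep j (p.1 + p.2) : ZMod n)
      ∧ w ≤ srep j (p.1 + p.2) ∧ srep j (p.1 + p.2) < w + n)
    (hsyminj : ∀ j < N, ∀ s s', srep j s = srep j s' → s = s')
    (hsymdisj : ∀ j < N, ∀ k < N, j ≠ k → ∀ α β, ∀ p ∈ Q j α, ∀ q ∈ Q k β,
      srep j (p.1 + p.2) ≠ srep k (q.1 + q.2))
    (hstab1 : ∀ j < N, (⋂ γ, Q j γ).ncard = tt j)
    (hstab2 : ∀ j < N, ∀ α β : Fin μ, α < β → Q j α ∩ Q j β = ⋂ γ, Q j γ) :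
    ∃ T : Fin μ → Set (ZMod n × ZMod n × ZMod n),
      (∀ α, IsTransversal n (T α)) ∧
      StablyIntersect n μ T (∑ j ∈ Finset.range N, tt j) := by
  haveI : NeZero n := ⟨hn.ne'⟩
  set off := boff msize with hoffdef
  have hoffsucc : ∀ j, off (j + 1) = off j + msize j := fun j => Finset.sum_range_succ _ _
  have hoffmono : ∀ j k, j ≤ k → off j ≤ off k := fun j k h =>
    Finset.sum_le_sum_of_subset (Finset.range_subset_range.mpr h)
  have hoffle : ∀ j < N, off j + msize j ≤ n := by
    intro j hj
    rw [← hoffsucc]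
    exact le_of_le_of_eq (hoffmono _ _ (by omega)) htot
  -- key: value off j + a with a < msize j determines j and a
  have keyrow : ∀ j < N, ∀ k < N, ∀ a c : ℕ, a < msize j → c < msize k →
      off j + a = off k + c → j = k ∧ a = c := by
    have half : ∀ j k a c : ℕ, j < N → k < N → j < k → a < msize j → c < msize k →
        off j + a ≠ off k + c := by
      intro j k a c hj hk hjk ha hc
      have h1 : off (j + 1) ≤ off k := hoffmono _ _ (by omega)
      have h2 := hoffsucc j
      omega
    intro j hj k hk a c ha hc heq
    rcases lt_trichotomy j k with h | h | h
    · exact absurd heq (half j k a c hj hk h ha hc)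
    · subst h; omega
    · exact absurd heq.symm (half k j c a hk hj h hc ha)
  have hcoordlt : ∀ j < N, ∀ a, a < msize j → off j + a < n := by
    intro j hj a ha; have := hoffle j hj; omega
  -- injectivity of bcm on block boxes
  have hcminj : ∀ j < N, ∀ p q : ℕ × ℕ, p.1 < msize j → p.2 < msize j → q.1 < msize j →
      q.2 < msize j → bcm n msize j p = bcm n msize j q → p = q := by
    intro j hj p q hp1 hp2 hq1 hq2 h
    simp only [bcm, Prod.mk.injEq] at h
    have e1 := castinj (hcoordlt j hj _ hp1) (hcoordlt j hj _ hq1) h.1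
    have e2 := castinj (hcoordlt j hj _ hp2) (hcoordlt j hj _ hq2) h.2.1
    have : p.1 = q.1 ∧ p.2 = q.2 := by omega
    exact Prod.ext this.1 this.2
  -- finiteness and cardinality of blocks
  have hQfin : ∀ j < N, ∀ α, (Q j α).Finite := by
    intro j hj α
    apply Set.Finite.subset (Set.finite_Iio (msize j) |>.prod (Set.finite_Iio (msize j)))
    intro p hp
    exact ⟨(hbounds j hj α p hp).1, (hbounds j hj α p hp).2⟩
  have hQcard : ∀ j < N, ∀ α, (Q j α).ncard = msize j := by
    intro j hj α
    have himg : Prod.fst '' Q j α = Set.Iio (msize j) := by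
      apply Set.Subset.antisymm
      · rintro r ⟨p, hp, rfl⟩; exact (hbounds j hj α p hp).1
      · intro r hr
        obtain ⟨p, ⟨hp, hp1⟩, -⟩ := hrow j hj α r hr
        exact ⟨p, hp, hp1⟩
    have hinj : Set.InjOn Prod.fst (Q j α) := by
      intro p hp q hq h
      obtain ⟨x, -, hu⟩ := hrow j hj α p.1 (hbounds j hj α p hp).1
      have h1 := hu p ⟨hp, rfl⟩
      have h2 := hu q ⟨hq, h.symm⟩
      exact h1.trans h2.symm
    rw [← Set.ncard_image_of_injOn hinj, himg,
      show (Set.Iio (msize j)) = ↑(Finset.range (msize j)) by ext x; simp,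
      Set.ncard_coe_finset, Finset.card_range]
  -- determination lemmas
  have rowdet : ∀ j < N, ∀ k < N, ∀ a c : ℕ, a < msize j → c < msize k →
      ((off j + a : ℕ) : ZMod n) = ((off k + c : ℕ) : ZMod n) → j = k ∧ a = c := by
    intro j hj k hk a c ha hc h
    exact keyrow j hj k hk _ _ ha hc (castinj (hcoordlt j hj _ ha) (hcoordlt k hk _ hc) h)
  have symdet : ∀ j < N, ∀ k < N, ∀ α β, ∀ p ∈ Q j α, ∀ q ∈ Q k β,
      ((2 * off j + p.1 + p.2 : ℕ) : ZMod n) = ((2 * off k + q.1 + q.2 : ℕ) : ZMod n) →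
      j = k ∧ p.1 + p.2 = q.1 + q.2 := by
    intro j hj k hk α β p hp q hq h
    obtain ⟨c1, w1, w2⟩ := hsym j hj α p hp
    obtain ⟨c2, w3, w4⟩ := hsym k hk β q hq
    rw [c1, c2] at h
    have heq := winj hn w1 w2 w3 w4 h
    by_cases hjk : j = k
    · subst hjk; exact ⟨rfl, hsyminj j hj _ _ heq⟩
    · exact absurd heq (hsymdisj j hj k hk hjk α β p hp q hq)
  have hQinj : ∀ j < N, ∀ (α : Fin μ), Set.InjOn (bcm n msize j) (Q j α) := by
    intro j hj α p hp q hq h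
    exact hcminj j hj p q (hbounds j hj α p hp).1 (hbounds j hj α p hp).2
      (hbounds j hj α q hq).1 (hbounds j hj α q hq).2 h
  -- the transversals
  refine ⟨fun α => ⋃ j ∈ Finset.range N, bcm n msize j '' Q j α, ?_, ?_⟩
  · intro α
    have hmem : ∀ x, x ∈ (⋃ j ∈ Finset.range N, bcm n msize j '' Q j α) ↔
        ∃ j, j < N ∧ ∃ p ∈ Q j α, bcm n msize j p = x := by
      intro x
      simp only [Set.mem_iUnion, Set.mem_image, Finset.mem_range, exists_prop]
    have hTcard : (⋃ j ∈ Finset.range N, bcm n msize j '' Q j α).ncard = n := by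
      rw [ncard_aux _ msize N ?fin ?disj ?card, htot]
      case fin => exact fun j hj => (hQfin j hj α).image _
      case disj =>
        intro j hj k hk hjk
        rw [Set.disjoint_left]
        rintro x ⟨p, hp, rfl⟩ ⟨q, hq, hx⟩
        simp only [bcm, Prod.mk.injEq] at hx
        exact hjk ((rowdet k hk j hj q.1 p.1 (hbounds k hk α q hq).1
          (hbounds j hj α p hp).1 hx.1).1).symm
      case card =>
        intro j hj
        rw [Set.ncard_image_of_injOn (hQinj j hj α), hQcard j hj α]
    refine ⟨?_, ?_, ?_, ?_⟩
    · intro x hx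
      obtain ⟨j, hj, p, hp, rfl⟩ := (hmem x).mp hx
      simp only [bcm]
      push_cast
      ring
    · -- rows
      have hinj : Set.InjOn (fun x => x.1) (⋃ j ∈ Finset.range N, bcm n msize j '' Q j α) := by
        intro x hx y hy hxy
        obtain ⟨j, hj, p, hp, rfl⟩ := (hmem x).mp hx
        obtain ⟨k, hk, q, hq, rfl⟩ := (hmem y).mp hy
        simp only [bcm] at hxy
        obtain ⟨hjk, hpq⟩ := rowdet j hj k hk p.1 q.1 (hbounds j hj α p hp).1
          (hbounds k hk α q hq).1 hxy
        subst hjk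
        obtain ⟨z, -, hu⟩ := hrow j hj α p.1 (hbounds j hj α p hp).1
        rw [(hu p ⟨hp, rfl⟩).trans (hu q ⟨hq, hpq.symm⟩).symm]
      exact projection_bij _ _ hinj (by rw [hTcard, ZMod.card])
    · -- columns
      have hinj : Set.InjOn (fun x => x.2.1) (⋃ j ∈ Finset.range N, bcm n msize j '' Q j α) := by
        intro x hx y hy hxy
        obtain ⟨j, hj, p, hp, rfl⟩ := (hmem x).mp hx
        obtain ⟨k, hk, q, hq, rfl⟩ := (hmem y).mp hy
        simp only [bcm] at hxy
        obtain ⟨hjk, hpq⟩ := rowdet j hj k hk p.2 q.2 (hbounds j hj α p hp).2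
          (hbounds k hk α q hq).2 hxy
        subst hjk
        rw [hcol j hj α p hp q hq hpq]
      exact projection_bij _ _ hinj (by rw [hTcard, ZMod.card])
    · -- symbols
      have hinj : Set.InjOn (fun x => x.2.2) (⋃ j ∈ Finset.range N, bcm n msize j '' Q j α) := by
        intro x hx y hy hxy
        obtain ⟨j, hj, p, hp, rfl⟩ := (hmem x).mp hx
        obtain ⟨k, hk, q, hq, rfl⟩ := (hmem y).mp hy
        simp only [bcm] at hxy
        obtain ⟨hjk, hpq⟩ := symdet j hj k hk α α p hp q hq hxy
        subst hjk
        rw [hsymu j hj α p hp q hq hpq]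
      exact projection_bij _ _ hinj (by rw [hTcard, ZMod.card])
  · -- stable intersection
    have hα01 : (⟨0, by omega⟩ : Fin μ) < (⟨1, by omega⟩ : Fin μ) := by
      simp [Fin.lt_def]
    refine ⟨⋃ j ∈ Finset.range N, bcm n msize j '' (⋂ γ, Q j γ), ?_, ?_, ?_⟩
    · -- cardinality
      rw [ncard_aux _ tt N ?fin ?disj ?card]
      case fin =>
        intro j hj
        exact ((hQfin j hj ⟨0, by omega⟩).subset (Set.iInter_subset _ _)).image _
      case disj =>
        intro j hj k hk hjk
        rw [Set.disjoint_left]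
        rintro x ⟨p, hp, rfl⟩ ⟨q, hq, hx⟩
        have hp' := Set.iInter_subset (fun γ => Q j γ) ⟨0, by omega⟩ hp
        have hq' := Set.iInter_subset (fun γ => Q k γ) ⟨0, by omega⟩ hq
        simp only [bcm, Prod.mk.injEq] at hx
        exact hjk ((rowdet k hk j hj q.1 p.1 (hbounds k hk _ q hq').1
          (hbounds j hj _ p hp').1 hx.1).1).symm
      case card =>
        intro j hj
        rw [Set.ncard_image_of_injOn
          ((hQinj j hj ⟨0, by omega⟩).mono (Set.iInter_subset _ _)), hstab1 j hj]
    · -- equals total intersection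
      have hSsubT : ∀ γ : Fin μ, (⋃ j ∈ Finset.range N, bcm n msize j '' (⋂ γ', Q j γ')) ⊆
          ⋃ j ∈ Finset.range N, bcm n msize j '' Q j γ := by
        intro γ
        refine Set.iUnion₂_mono fun j hj => Set.image_mono (Set.iInter_subset _ γ)
      refine Set.Subset.antisymm (Set.subset_iInter hSsubT) ?_
      intro x hx
      have h0 := Set.mem_iInter.mp hx ⟨0, by omega⟩
      have h1 := Set.mem_iInter.mp hx ⟨1, by omega⟩
      simp only [Set.mem_iUnion, Set.mem_image, Finset.mem_range, exists_prop] at h0 h1 ⊢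
      obtain ⟨j, hj, p, hp, rfl⟩ := h0
      obtain ⟨k, hk, q, hq, heq⟩ := h1
      simp only [bcm, Prod.mk.injEq] at heq
      obtain ⟨hjk, hpq1⟩ := rowdet k hk j hj q.1 p.1 (hbounds k hk _ q hq).1
        (hbounds j hj _ p hp).1 heq.1
      subst hjk
      obtain ⟨-, hpq2⟩ := rowdet k hk k hk q.2 p.2 (hbounds k hk _ q hq).2
        (hbounds k hk _ p hp).2 heq.2.1
      have hqp : q = p := Prod.ext hpq1 hpq2
      subst hqp
      have hmemi : q ∈ Q k ⟨0, by omega⟩ ∩ Q k ⟨1, by omega⟩ := ⟨hp, hq⟩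
      rw [hstab2 k hk _ _ hα01] at hmemi
      exact ⟨k, hk, q, hmemi, rfl⟩
    · -- pairwise
      intro α β hαβ
      apply Set.Subset.antisymm
      · rintro x ⟨hxa, hxb⟩
        simp only [Set.mem_iUnion, Set.mem_image, Finset.mem_range, exists_prop] at hxa hxb ⊢
        obtain ⟨j, hj, p, hp, rfl⟩ := hxa
        obtain ⟨k, hk, q, hq, heq⟩ := hxb
        simp only [bcm, Prod.mk.injEq] at heq
        obtain ⟨hjk, hpq1⟩ := rowdet k hk j hj q.1 p.1 (hbounds k hk _ q hq).1
          (hbounds j hj _ p hp).1 heq.1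
        subst hjk
        obtain ⟨-, hpq2⟩ := rowdet k hk k hk q.2 p.2 (hbounds k hk _ q hq).2
          (hbounds k hk _ p hp).2 heq.2.1
        have hqp : q = p := Prod.ext hpq1 hpq2
        subst hqp
        have hmemi : q ∈ Q k α ∩ Q k β := ⟨hp, hq⟩
        rw [hstab2 k hk _ _ hαβ] at hmemi
        exact ⟨k, hk, q, hmemi, rfl⟩
      · intro x hx
        constructor
        · exact Set.iUnion₂_mono (fun j hj => Set.image_mono (Set.iInter_subset _ α)) hx
        · exact Set.iUnion₂_mono (fun j hj => Set.image_mono (Set.iInter_subset _ β)) hx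

def IsPartialTransversalIn (m : ℕ) (Sym : Set ℕ) (P : Set (ℕ × ℕ)) : Prop :=
  (∀ x ∈ P, x.1 < m ∧ x.2 < m) ∧
  (∀ r < m, ∃! x : ℕ × ℕ, x ∈ P ∧ x.1 = r) ∧
  (∀ c < m, ∃! x : ℕ × ℕ, x ∈ P ∧ x.2 = c) ∧
  (∀ x ∈ P, x.1 + x.2 ∈ Sym) ∧
  (∀ s ∈ Sym, ∃! x : ℕ × ℕ, x ∈ P ∧ x.1 + x.2 = s)

def StablyIntersectP (μ : ℕ) (P : Fin μ → Set (ℕ × ℕ)) (t : ℕ) : Prop :=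
  ∃ S : Set (ℕ × ℕ), S.ncard = t ∧ S = ⋂ i, P i ∧
    ∀ i j : Fin μ, i < j → P i ∩ P j = S

def pms (b d I : ℕ) : ℕ → ℕ := fun j => if j = 0 then b + d else if j = I + 1 then d else b

def pQ (d I : ℕ) {μ : ℕ} (P0 : Fin μ → Set (ℕ × ℕ)) (Pb : ℕ → Fin μ → Set (ℕ × ℕ)) :
    ℕ → Fin μ → Set (ℕ × ℕ) := fun j α =>
  if j = 0 then P0 α else if j = I + 1 then {p : ℕ × ℕ | p.1 < d ∧ p.2 = p.1}
  else Pb (if j ≤ I then j else j - 1) α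

def psr (n b d I : ℕ) (j s : ℕ) : ℕ :=
  if j ≤ I then 2 * boff (pms b d I) j + s else 2 * boff (pms b d I) j + s - n

lemma castsub {n : ℕ} (x : ℕ) (h : n ≤ x) : ((x : ℕ) : ZMod n) = ((x - n : ℕ) : ZMod n) := by
  conv_lhs => rw [show x = (x - n) + n by omega]
  push_cast
  simp [ZMod.natCast_self]

lemma smallcard (d : ℕ) : ({p : ℕ × ℕ | p.1 < d ∧ p.2 = p.1}).ncard = d := by
  have h : {p : ℕ × ℕ | p.1 < d ∧ p.2 = p.1} = (fun k => (k, k)) '' Set.Iio d := by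
    ext ⟨a, c⟩
    simp only [Set.mem_setOf_eq, Set.mem_image, Set.mem_Iio]
    constructor
    · rintro ⟨h1, h2⟩; exact ⟨a, h1, by rw [h2]⟩
    · rintro ⟨k, hk, heq⟩
      rw [Prod.mk.injEq] at heq
      obtain ⟨rfl, rfl⟩ := heq
      exact ⟨hk, rfl⟩
  rw [h, Set.ncard_image_of_injOn (fun x _ y _ hxy => congrArg Prod.fst hxy),
    show (Set.Iio d) = ↑(Finset.range d) by ext x; simp, Set.ncard_coe_finset, Finset.card_range]

set_option maxHeartbeats 1000000 in
theorem principal_construction (n b d I μ : ℕ) (t : ℕ → ℕ)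
    (hn : Odd n) (hb : Odd b) (hb3 : 3 ≤ b) (hbn : 3 * b ≤ n)
    (hI : 1 ≤ I) (hd : d ≤ b - 1) (hμ : 2 ≤ μ)
    (hsize : n = 2 * b * I + b + 2 * d)
    (hbase : ∀ i, 1 ≤ i → i ≤ 2 * I →
      ∃ P : Fin μ → Set (ℕ × ℕ),
        (∀ α, IsPartialTransversalIn b
          (Set.Icc ((b - 1) / 2) ((b - 1) / 2 + (b - 1))) (P α)) ∧
        StablyIntersectP μ P (t i))
    (hlarge : ∃ P : Fin μ → Set (ℕ × ℕ),
        (∀ α, IsPartialTransversalIn (b + d)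
          (Set.Icc ((b - 1) / 2) ((b - 1) / 2 + (b - 1) + 2 * d) \
            {s : ℕ | ∃ j, j < d ∧ s = b + 2 * j}) (P α)) ∧
        StablyIntersectP μ P (t 0)) :
    ∃ T : Fin μ → Set (ZMod n × ZMod n × ZMod n),
      (∀ α, IsTransversal n (T α)) ∧
      StablyIntersect n μ T (d + ∑ i ∈ Finset.range (2 * I + 1), t i) := by
  obtain ⟨h0, hb0⟩ := hb
  have hh : (b - 1) / 2 = h0 := by omega
  have hh1 : 1 ≤ h0 := by omega
  have hd' : d < b := by omega
  have hn0 : 0 < n := by omega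
  have emul : 2 * b * I = 2 * (b * I) := by ring
  haveI : Nonempty (Fin μ) := ⟨⟨0, by omega⟩⟩
  obtain ⟨P0, hP0, hP0s⟩ := hlarge
  have hbase' : ∀ i : ℕ, ∃ P : Fin μ → Set (ℕ × ℕ), 1 ≤ i → i ≤ 2 * I →
      (∀ α, IsPartialTransversalIn b
        (Set.Icc ((b - 1) / 2) ((b - 1) / 2 + (b - 1))) (P α)) ∧
      StablyIntersectP μ P (t i) := by
    intro i
    by_cases hi : 1 ≤ i ∧ i ≤ 2 * I
    · obtain ⟨P, hP1, hP2⟩ := hbase i hi.1 hi.2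
      exact ⟨P, fun _ _ => ⟨hP1, hP2⟩⟩
    · exact ⟨fun _ => ∅, fun h1 h2 => absurd ⟨h1, h2⟩ hi⟩
  choose Pb hPb using hbase'
  -- unfolding equations
  have hclass : ∀ j < 2 * I + 2, j = 0 ∨ (1 ≤ j ∧ j ≤ I) ∨ j = I + 1 ∨ (I + 2 ≤ j ∧ j ≤ 2 * I + 1) := by
    omega
  have hQ0 : ∀ α, pQ d I P0 Pb 0 α = P0 α := fun α => by simp [pQ]
  have hQs : ∀ α : Fin μ, pQ d I P0 Pb (I + 1) α = {p : ℕ × ℕ | p.1 < d ∧ p.2 = p.1} := by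
    intro α; simp [pQ]
  have hQA : ∀ j, 1 ≤ j → j ≤ I → ∀ α, pQ d I P0 Pb j α = Pb j α := by
    intro j h1 h2 α
    rw [pQ, if_neg (by omega), if_neg (by omega), if_pos (by omega)]
  have hQB : ∀ j, I + 2 ≤ j → ∀ α, pQ d I P0 Pb j α = Pb (j - 1) α := by
    intro j h1 α
    rw [pQ, if_neg (by omega), if_neg (by omega), if_neg (by omega)]
  have hms0 : pms b d I 0 = b + d := by simp [pms]
  have hmsS : pms b d I (I + 1) = d := by simp [pms]
  have hmsA : ∀ j, 1 ≤ j → j ≠ I + 1 → pms b d I j = b := by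
    intro j h1 h2
    rw [pms, if_neg (by omega), if_neg (by omega)]
  -- closed form for the offsets
  have hoffcf : ∀ j ≤ 2 * I + 2, boff (pms b d I) j =
      if j = 0 then 0 else if j ≤ I then b * j + d else if j = I + 1 then b * I + b + d
      else b * (j - 1) + 2 * d := by
    intro j hj
    induction j with
    | zero => simp [boff]
    | succ j ih =>
      have hstep : boff (pms b d I) (j + 1) = boff (pms b d I) j + pms b d I j :=
        Finset.sum_range_succ _ _
      rw [hstep, ih (by omega)]
      simp only [pms, Nat.add_sub_cancel]
      by_cases hj0 : j = 0
      · subst hj0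
        have e3 : b * (0 + 1) = b := by ring
        split_ifs <;> (try contradiction) <;> omega
      · by_cases hjlt : j < I
        · have e1 : b * (j + 1) = b * j + b := by ring
          have e1' : b * (j - 1) + b = b * j := by
            have hj1 : j - 1 + 1 = j := by omega
            calc b * (j - 1) + b = b * ((j - 1) + 1) := by ring
            _ = b * j := by rw [hj1]
          split_ifs <;> (try contradiction) <;> omega
        · by_cases hjI : j = I
          · subst hjI
            have e4 : b * (j + 1) = b * j + b := by ring
            split_ifs <;> (try contradiction) <;> omega
          · by_cases hjI1 : j = I + 1
            · subst hjI1
              have e2 : b * (I + 1 + 1) = b * (I + 1) + b := by ring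
              have e2' : b * (I + 1) = b * I + b := by ring
              split_ifs <;> (try contradiction) <;> omega
            · have hj1 : j - 1 + 1 = j := by omega
              have e5 : b * (j - 1) + b = b * j := by
                calc b * (j - 1) + b = b * ((j - 1) + 1) := by ring
                _ = b * j := by rw [hj1]
              split_ifs <;> (try contradiction) <;> omega
  have hoffA : ∀ j, 1 ≤ j → j ≤ I → boff (pms b d I) j = b * j + d := by
    intro j h1 h2
    rw [hoffcf j (by omega), if_neg (by omega), if_pos (by omega)]
  have hoffS : boff (pms b d I) (I + 1) = b * I + b + d := by
    rw [hoffcf (I + 1) (by omega), if_neg (by omega), if_neg (by omega), if_pos rfl]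
  have hoffB : ∀ j, I + 2 ≤ j → j ≤ 2 * I + 2 → boff (pms b d I) j = b * (j - 1) + 2 * d := by
    intro j h1 h2
    rw [hoffcf j (by omega), if_neg (by omega), if_neg (by omega), if_neg (by omega)]
  have hoff0 : boff (pms b d I) 0 = 0 := by simp [boff]
  -- srep closed forms
  have hsr0 : ∀ s, psr n b d I 0 s = s := by
    intro s; rw [psr, if_pos (by omega), hoff0]; omega
  have hsrA : ∀ j, 1 ≤ j → j ≤ I → ∀ s, psr n b d I j s = 2 * (b * j + d) + s := by
    intro j h1 h2 s; rw [psr, if_pos h2, hoffA j h1 h2]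
  have hsrS : ∀ s, psr n b d I (I + 1) s = b + s := by
    intro s
    rw [psr, if_neg (by omega), hoffS]
    omega
  have hsrB : ∀ j, I + 2 ≤ j → j ≤ 2 * I + 1 → ∀ s,
      psr n b d I j s + n = 2 * (b * (j - 1) + 2 * d) + s := by
    intro j h1 h2 s
    rw [psr, if_neg (by omega), hoffB j h1 (by omega)]
    have f1 : b * (I + 1) ≤ b * (j - 1) := Nat.mul_le_mul_left b (by omega)
    have f2 : b * (I + 1) = b * I + b := by ring
    omega
  -- cell symbol facts
  have hcell0 : ∀ α, ∀ p ∈ P0 α, h0 ≤ p.1 + p.2 ∧ p.1 + p.2 ≤ 3 * h0 + 2 * d ∧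
      ¬∃ m, m < d ∧ p.1 + p.2 = b + 2 * m := by
    intro α p hp
    have h := (hP0 α).2.2.2.1 p hp
    simp only [Set.mem_diff, Set.mem_Icc, Set.mem_setOf_eq] at h
    exact ⟨by omega, by omega, h.2⟩
  have hcellb : ∀ i, 1 ≤ i → i ≤ 2 * I → ∀ α, ∀ p ∈ Pb i α,
      h0 ≤ p.1 + p.2 ∧ p.1 + p.2 ≤ 3 * h0 := by
    intro i h1 h2 α p hp
    have h := ((hPb i h1 h2).1 α).2.2.2.1 p hp
    simp only [Set.mem_Icc] at h
    omega
  -- hypotheses for blocks_construction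
  have Htot : ∑ k ∈ Finset.range (2 * I + 2), pms b d I k = n := by
    have h1 : (∑ k ∈ Finset.range (2 * I + 2), pms b d I k) = boff (pms b d I) (2 * I + 2) := rfl
    rw [h1, hoffB (2 * I + 2) (by omega) le_rfl]
    have e : b * (2 * I + 2 - 1) = 2 * b * I + b := by
      have h2 : 2 * I + 2 - 1 = 2 * I + 1 := by omega
      rw [h2]; ring
    omega
  have Hbounds : ∀ j < 2 * I + 2, ∀ α : Fin μ, ∀ p ∈ pQ d I P0 Pb j α,
      p.1 < pms b d I j ∧ p.2 < pms b d I j := by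
    intro j hj α p hp
    rcases hclass j hj with rfl | ⟨h1, h2⟩ | rfl | ⟨h1, h2⟩
    · rw [hQ0] at hp; rw [hms0]; exact (hP0 α).1 p hp
    · rw [hQA j h1 h2] at hp
      rw [hmsA j h1 (by omega)]
      exact ((hPb j h1 (by omega)).1 α).1 p hp
    · rw [hQs] at hp
      rw [hmsS]
      exact ⟨hp.1, by rw [hp.2]; exact hp.1⟩
    · rw [hQB j (by omega)] at hp
      rw [hmsA j (by omega) (by omega)]
      exact ((hPb (j - 1) (by omega) (by omega)).1 α).1 p hp
  have Hrow : ∀ j < 2 * I + 2, ∀ α : Fin μ, ∀ r < pms b d I j,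
      ∃! p : ℕ × ℕ, p ∈ pQ d I P0 Pb j α ∧ p.1 = r := by
    intro j hj α r hr
    rcases hclass j hj with rfl | ⟨h1, h2⟩ | rfl | ⟨h1, h2⟩
    · rw [hms0] at hr; simp only [hQ0]; exact (hP0 α).2.1 r hr
    · rw [hmsA j h1 (by omega)] at hr
      simp only [hQA j h1 h2]
      exact ((hPb j h1 (by omega)).1 α).2.1 r hr
    · rw [hmsS] at hr
      simp only [hQs]
      refine ⟨(r, r), ⟨⟨hr, rfl⟩, rfl⟩, ?_⟩
      rintro ⟨a, c⟩ ⟨⟨hc1, hc2⟩, hc3⟩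
      simp only at hc2 hc3
      rw [Prod.mk.injEq]
      exact ⟨hc3, by omega⟩
    · rw [hmsA j (by omega) (by omega)] at hr
      simp only [hQB j (by omega)]
      exact ((hPb (j - 1) (by omega) (by omega)).1 α).2.1 r hr
  have Hcol : ∀ j < 2 * I + 2, ∀ α : Fin μ, ∀ p ∈ pQ d I P0 Pb j α, ∀ q ∈ pQ d I P0 Pb j α,
      p.2 = q.2 → p = q := by
    intro j hj α p hp q hq hpq
    rcases hclass j hj with rfl | ⟨h1, h2⟩ | rfl | ⟨h1, h2⟩
    · rw [hQ0] at hp hq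
      obtain ⟨z, -, hu⟩ := (hP0 α).2.2.1 p.2 ((hP0 α).1 p hp).2
      exact (hu p ⟨hp, rfl⟩).trans (hu q ⟨hq, hpq.symm⟩).symm
    · rw [hQA j h1 h2] at hp hq
      obtain ⟨z, -, hu⟩ := ((hPb j h1 (by omega)).1 α).2.2.1 p.2 (((hPb j h1 (by omega)).1 α).1 p hp).2
      exact (hu p ⟨hp, rfl⟩).trans (hu q ⟨hq, hpq.symm⟩).symm
    · rw [hQs] at hp hq
      simp only [Set.mem_setOf_eq] at hp hq
      exact Prod.ext (by omega) hpq
    · rw [hQB j (by omega)] at hp hq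
      obtain ⟨z, -, hu⟩ := ((hPb (j - 1) (by omega) (by omega)).1 α).2.2.1 p.2
        (((hPb (j - 1) (by omega) (by omega)).1 α).1 p hp).2
      exact (hu p ⟨hp, rfl⟩).trans (hu q ⟨hq, hpq.symm⟩).symm
  have Hsymu : ∀ j < 2 * I + 2, ∀ α : Fin μ, ∀ p ∈ pQ d I P0 Pb j α, ∀ q ∈ pQ d I P0 Pb j α,
      p.1 + p.2 = q.1 + q.2 → p = q := by
    intro j hj α p hp q hq hpq
    rcases hclass j hj with rfl | ⟨h1, h2⟩ | rfl | ⟨h1, h2⟩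
    · rw [hQ0] at hp hq
      obtain ⟨z, -, hu⟩ := (hP0 α).2.2.2.2 (p.1 + p.2) ((hP0 α).2.2.2.1 p hp)
      exact (hu p ⟨hp, rfl⟩).trans (hu q ⟨hq, hpq.symm⟩).symm
    · rw [hQA j h1 h2] at hp hq
      obtain ⟨z, -, hu⟩ := ((hPb j h1 (by omega)).1 α).2.2.2.2 (p.1 + p.2)
        (((hPb j h1 (by omega)).1 α).2.2.2.1 p hp)
      exact (hu p ⟨hp, rfl⟩).trans (hu q ⟨hq, hpq.symm⟩).symm
    · rw [hQs] at hp hq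
      simp only [Set.mem_setOf_eq] at hp hq
      exact Prod.ext (by omega) (by omega)
    · rw [hQB j (by omega)] at hp hq
      obtain ⟨z, -, hu⟩ := ((hPb (j - 1) (by omega) (by omega)).1 α).2.2.2.2 (p.1 + p.2)
        (((hPb (j - 1) (by omega) (by omega)).1 α).2.2.2.1 p hp)
      exact (hu p ⟨hp, rfl⟩).trans (hu q ⟨hq, hpq.symm⟩).symm
  have Hsym : ∀ j < 2 * I + 2, ∀ α : Fin μ, ∀ p ∈ pQ d I P0 Pb j α,
      ((2 * boff (pms b d I) j + p.1 + p.2 : ℕ) : ZMod n) = (psr n b d I j (p.1 + p.2) : ZMod n)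
      ∧ h0 ≤ psr n b d I j (p.1 + p.2) ∧ psr n b d I j (p.1 + p.2) < h0 + n := by
    intro j hj α p hp
    rcases hclass j hj with rfl | ⟨h1, h2⟩ | rfl | ⟨h1, h2⟩
    · rw [hQ0] at hp
      obtain ⟨c1, c2, c3⟩ := hcell0 α p hp
      refine ⟨?_, ?_, ?_⟩
      · rw [hsr0, hoff0]; push_cast; ring
      · rw [hsr0]; omega
      · rw [hsr0]; omega
    · rw [hQA j h1 h2] at hp
      obtain ⟨c1, c2⟩ := hcellb j h1 (by omega) α p hp
      have f1 : b * j ≤ b * I := Nat.mul_le_mul_left b h2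
      refine ⟨?_, ?_, ?_⟩
      · rw [hsrA j h1 h2, hoffA j h1 h2]; push_cast; ring
      · rw [hsrA j h1 h2]; omega
      · rw [hsrA j h1 h2]; omega
    · rw [hQs] at hp
      simp only [Set.mem_setOf_eq] at hp
      refine ⟨?_, ?_, ?_⟩
      · rw [hsrS]
        rw [show 2 * boff (pms b d I) (I + 1) + p.1 + p.2 = n + (b + (p.1 + p.2)) by
          rw [hoffS]; omega]
        push_cast
        rw [ZMod.natCast_self]
        ring
      · rw [hsrS]; omega
      · rw [hsrS]; omega
    · rw [hQB j h1] at hp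
      obtain ⟨c1, c2⟩ := hcellb (j - 1) (by omega) (by omega) α p hp
      have key := hsrB j h1 h2 (p.1 + p.2)
      have f1 : b * (I + 1) ≤ b * (j - 1) := Nat.mul_le_mul_left b (by omega)
      have f2 : b * (j - 1) ≤ b * (2 * I) := Nat.mul_le_mul_left b (by omega)
      have f3 : b * (I + 1) = b * I + b := by ring
      have f4 : b * (2 * I) = 2 * (b * I) := by ring
      refine ⟨?_, ?_, ?_⟩
      · rw [show 2 * boff (pms b d I) j + p.1 + p.2 = n + psr n b d I j (p.1 + p.2) by
          rw [hoffB j h1 (by omega)]; omega]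
        push_cast
        rw [ZMod.natCast_self]
        ring
      · omega
      · omega
  have Hsyminj : ∀ j < 2 * I + 2, ∀ s s', psr n b d I j s = psr n b d I j s' → s = s' := by
    intro j hj s s' heq
    by_cases hcJ : j ≤ I
    · simp only [psr, if_pos hcJ] at heq; omega
    · have h2 : n ≤ 2 * boff (pms b d I) j := by
        by_cases hJ1 : j = I + 1
        · subst hJ1; rw [hoffS]; omega
        · rw [hoffB j (by omega) (by omega)]
          have f1 : b * (I + 1) ≤ b * (j - 1) := Nat.mul_le_mul_left b (by omega)
          have f3 : b * (I + 1) = b * I + b := by ring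
          omega
      simp only [psr, if_neg hcJ] at heq
      omega
  have Hsymdisj : ∀ j < 2 * I + 2, ∀ k < 2 * I + 2, j ≠ k → ∀ α β : Fin μ,
      ∀ p ∈ pQ d I P0 Pb j α, ∀ q ∈ pQ d I P0 Pb k β,
      psr n b d I j (p.1 + p.2) ≠ psr n b d I k (q.1 + q.2) := by
    have key : ∀ j k : ℕ, j < k → k < 2 * I + 2 → ∀ (α β : Fin μ), ∀ p ∈ pQ d I P0 Pb j α,
        ∀ q ∈ pQ d I P0 Pb k β, psr n b d I j (p.1 + p.2) ≠ psr n b d I k (q.1 + q.2) := by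
      intro j k hjk hk α β p hp q hq heq
      have hj : j < 2 * I + 2 := by omega
      rcases hclass j hj with rfl | ⟨hj1, hj2⟩ | rfl | ⟨hj1, hj2⟩ <;>
        rcases hclass k hk with rfl | ⟨hk1, hk2⟩ | rfl | ⟨hk1, hk2⟩
      · omega
      · -- j = 0, k in A
        rw [hQ0] at hp; rw [hQA k hk1 hk2] at hq
        obtain ⟨a1, a2, a3⟩ := hcell0 α p hp
        obtain ⟨b1, b2⟩ := hcellb k hk1 (by omega) β q hq
        rw [hsr0, hsrA k hk1 hk2] at heq
        have f1 : b * 1 ≤ b * k := Nat.mul_le_mul_left b hk1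
        have f2 : b * 1 = b := by ring
        omega
      · -- j = 0, k small
        rw [hQ0] at hp; rw [hQs] at hq
        simp only [Set.mem_setOf_eq] at hq
        obtain ⟨a1, a2, a3⟩ := hcell0 α p hp
        rw [hsr0, hsrS] at heq
        exact a3 ⟨q.1, hq.1, by omega⟩
      · -- j = 0, k in B
        rw [hQ0] at hp; rw [hQB k (by omega)] at hq
        obtain ⟨a1, a2, a3⟩ := hcell0 α p hp
        obtain ⟨b1, b2⟩ := hcellb (k - 1) (by omega) (by omega) β q hq
        have hB := hsrB k hk1 hk2 (q.1 + q.2)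
        rw [hsr0] at heq
        have f1 : b * (I + 1) ≤ b * (k - 1) := Nat.mul_le_mul_left b (by omega)
        have f3 : b * (I + 1) = b * I + b := by ring
        omega
      · omega
      · -- A A
        rw [hQA j hj1 hj2] at hp; rw [hQA k hk1 hk2] at hq
        obtain ⟨a1, a2⟩ := hcellb j hj1 (by omega) α p hp
        obtain ⟨b1, b2⟩ := hcellb k hk1 (by omega) β q hq
        rw [hsrA j hj1 hj2, hsrA k hk1 hk2] at heq
        have f1 : b * (j + 1) ≤ b * k := Nat.mul_le_mul_left b (by omega)
        have f2 : b * (j + 1) = b * j + b := by ring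
        omega
      · -- A small
        rw [hQA j hj1 hj2] at hp; rw [hQs] at hq
        simp only [Set.mem_setOf_eq] at hq
        obtain ⟨a1, a2⟩ := hcellb j hj1 (by omega) α p hp
        rw [hsrA j hj1 hj2, hsrS] at heq
        have f1 : b * 1 ≤ b * j := Nat.mul_le_mul_left b hj1
        have f2 : b * 1 = b := by ring
        omega
      · -- A B
        rw [hQA j hj1 hj2] at hp; rw [hQB k (by omega)] at hq
        obtain ⟨a1, a2⟩ := hcellb j hj1 (by omega) α p hp
        obtain ⟨b1, b2⟩ := hcellb (k - 1) (by omega) (by omega) β q hq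
        have hB := hsrB k hk1 hk2 (q.1 + q.2)
        rw [hsrA j hj1 hj2] at heq
        rcases le_or_gt (k - 1) (I + j) with hc | hc
        · have f1 : b * (k - 1) ≤ b * (I + j) := Nat.mul_le_mul_left b hc
          have f2 : b * (I + j) = b * I + b * j := by ring
          omega
        · have f1 : b * (I + j + 1) ≤ b * (k - 1) := Nat.mul_le_mul_left b (by omega)
          have f2 : b * (I + j + 1) = b * I + b * j + b := by ring
          omega
      · omega
      · omega
      · omega
      · -- small, B
        rw [hQs] at hp; rw [hQB k (by omega)] at hq
        simp only [Set.mem_setOf_eq] at hp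
        obtain ⟨b1, b2⟩ := hcellb (k - 1) (by omega) (by omega) β q hq
        have hB := hsrB k hk1 hk2 (q.1 + q.2)
        rw [hsrS] at heq
        have f1 : b * (I + 1) ≤ b * (k - 1) := Nat.mul_le_mul_left b (by omega)
        have f3 : b * (I + 1) = b * I + b := by ring
        omega
      · omega
      · omega
      · omega
      · -- B B
        rw [hQB j (by omega)] at hp; rw [hQB k (by omega)] at hq
        obtain ⟨a1, a2⟩ := hcellb (j - 1) (by omega) (by omega) α p hp
        obtain ⟨b1, b2⟩ := hcellb (k - 1) (by omega) (by omega) β q hq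
        have hBj := hsrB j hj1 hj2 (p.1 + p.2)
        have hBk := hsrB k hk1 hk2 (q.1 + q.2)
        have f1 : b * (j - 1 + 1) ≤ b * (k - 1) := Nat.mul_le_mul_left b (by omega)
        have f2 : b * (j - 1 + 1) = b * (j - 1) + b := by ring
        omega
    intro j hj k hk hne α β p hp q hq
    rcases lt_or_gt_of_ne hne with h | h
    · exact key j k h hk α β p hp q hq
    · exact fun he => key k j h hj β α q hq p hp he.symm
  have Hstab1 : ∀ j < 2 * I + 2, (⋂ γ, pQ d I P0 Pb j γ).ncard =
      (if j = 0 then t 0 else if j = I + 1 then d else if j ≤ I then t j else t (j - 1)) := by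
    intro j hj
    rcases hclass j hj with rfl | ⟨h1, h2⟩ | rfl | ⟨h1, h2⟩
    · simp only [hQ0]
      obtain ⟨S, hS1, hS2, -⟩ := hP0s
      rw [← hS2]
      split_ifs <;> first | exact hS1 | omega | contradiction
    · simp only [hQA j h1 h2]
      obtain ⟨S, hS1, hS2, -⟩ := (hPb j h1 (by omega)).2
      rw [← hS2]
      split_ifs <;> first | exact hS1 | omega | contradiction
    · simp only [hQs]
      rw [Set.iInter_const]
      split_ifs <;> first | exact smallcard d | omega | contradiction
    · simp only [hQB j (by omega)]
      obtain ⟨S, hS1, hS2, -⟩ := (hPb (j - 1) (by omega) (by omega)).2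
      rw [← hS2]
      split_ifs <;> first | exact hS1 | omega | contradiction
  have Hstab2 : ∀ j < 2 * I + 2, ∀ α β : Fin μ, α < β →
      pQ d I P0 Pb j α ∩ pQ d I P0 Pb j β = ⋂ γ, pQ d I P0 Pb j γ := by
    intro j hj α β hab
    rcases hclass j hj with rfl | ⟨h1, h2⟩ | rfl | ⟨h1, h2⟩
    · simp only [hQ0]
      obtain ⟨S, -, hS2, hS3⟩ := hP0s
      rw [hS3 α β hab, hS2]
    · simp only [hQA j h1 h2]
      obtain ⟨S, -, hS2, hS3⟩ := (hPb j h1 (by omega)).2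
      rw [hS3 α β hab, hS2]
    · simp only [hQs]
      rw [Set.inter_self, Set.iInter_const]
    · simp only [hQB j (by omega)]
      obtain ⟨S, -, hS2, hS3⟩ := (hPb (j - 1) (by omega) (by omega)).2
      rw [hS3 α β hab, hS2]
  have hsum : ∑ j ∈ Finset.range (2 * I + 2),
      (if j = 0 then t 0 else if j = I + 1 then d else if j ≤ I then t j else t (j - 1)) =
      d + ∑ i ∈ Finset.range (2 * I + 1), t i := by
    rw [← Finset.sum_erase_add _ _ (show I + 1 ∈ Finset.range (2 * I + 2) by
      simp only [Finset.mem_range]; omega)]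
    rw [if_neg (show ¬(I + 1 = 0) by omega), if_pos rfl, add_comm]
    congr 1
    refine Finset.sum_bij' (fun j _ => if j ≤ I then j else j - 1)
      (fun i _ => if i ≤ I then i else i + 1) ?_ ?_ ?_ ?_ ?_
    · intro a ha
      simp only [Finset.mem_erase, Finset.mem_range] at ha
      simp only [Finset.mem_range]
      try dsimp only
      split_ifs <;> omega
    · intro a ha
      simp only [Finset.mem_range] at ha
      simp only [Finset.mem_erase, Finset.mem_range]
      try dsimp only
      split_ifs <;> omega
    · intro a ha
      simp only [Finset.mem_erase, Finset.mem_range] at ha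
      try dsimp only
      split_ifs <;> omega
    · intro a ha
      simp only [Finset.mem_range] at ha
      try dsimp only
      split_ifs <;> omega
    · intro a ha
      simp only [Finset.mem_erase, Finset.mem_range] at ha
      try dsimp only
      split_ifs <;> first | rfl | (exact congrArg t (by omega)) | omega
  obtain ⟨T, hT1, hT2⟩ := blocks_construction n (2 * I + 2) μ h0 hn0 hμ (pms b d I)
    (pQ d I P0 Pb)
    (fun j => if j = 0 then t 0 else if j = I + 1 then d else if j ≤ I then t j else t (j - 1))
    (psr n b d I) Htot Hbounds Hrow Hcol Hsymu Hsym Hsyminj Hsymdisj Hstab1 Hstab2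
  rw [hsum] at hT2
  exact ⟨T, hT1, hT2⟩
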